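/- Let K be a number field, P ∈ K[X,Y] with p = deg_X P ≥ 1, q = deg_Y P ≥ 1, and A ∈ K[X,Y] with deg_X A ≤ n, deg_Y A ≤ q−1. Set r = max{p,q} and D(A) = (∂P/∂Y)(∂A/∂X) − (∂P/∂X)(∂A/∂Y). Then for every place v of K and every nonnegative integer s: |D^s(A)|_v ≤ δ_v(2(p+1)(q+1)r(n+rs))^s · |P|_v^s · |A|_v. -/

import Mathlib

open MvPolynomial

noncomputable section

/-- The sup of the `v`-adic absolute values of the coefficients of a polynomial,
`|P|_v`. -/
def polyNormAt {K : Type} [Field K] (v : AbsoluteValue K ℝ) {σ : Type}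
    (P : MvPolynomial σ K) : ℝ :=
  ((P.support.sup fun m => (⟨v (coeff m P), v.nonneg _⟩ : NNReal)) : NNReal)

/-- `v` is a place of `K`: its restriction to `ℚ` is the usual archimedean
absolute value, or it is non-archimedean and restricts to a `p`-adic absolute
value on `ℚ` with `|p|_v = 1/p`. -/
def IsPlace {K : Type} [Field K] (v : AbsoluteValue K ℝ) : Prop :=
  (∀ n : ℕ, v (n : K) = n) ∨
    (∃ p : ℕ, p.Prime ∧ (∀ x y : K, v (x + y) ≤ max (v x) (v y)) ∧
      v (p : K) = 1 / p)

/-- The differential operator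
`D(A) = (∂P/∂Y)(∂A/∂X) − (∂P/∂X)(∂A/∂Y)`. -/
def Dop {K : Type} [CommRing K] (P A : MvPolynomial (Fin 2) K) :
    MvPolynomial (Fin 2) K :=
  pderiv 1 P * pderiv 0 A - pderiv 0 P * pderiv 1 A

namespace Aux

variable {K : Type} [Field K]

lemma polyNormAt_nonneg (v : AbsoluteValue K ℝ) {σ : Type} (P : MvPolynomial σ K) :
    0 ≤ polyNormAt v P := NNReal.coe_nonneg _

lemma v_coeff_le (v : AbsoluteValue K ℝ) {σ : Type} (P : MvPolynomial σ K) (m : σ →₀ ℕ) :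
    v (coeff m P) ≤ polyNormAt v P := by
  by_cases h : m ∈ P.support
  · exact_mod_cast (Finset.le_sup (f := fun m => (⟨v (coeff m P), v.nonneg _⟩ : NNReal)) h)
  · rw [MvPolynomial.notMem_support_iff.mp h, map_zero]
    exact polyNormAt_nonneg v P

lemma polyNormAt_le {v : AbsoluteValue K ℝ} {σ : Type} {P : MvPolynomial σ K} {c : ℝ}
    (hc : 0 ≤ c) (h : ∀ m, v (coeff m P) ≤ c) : polyNormAt v P ≤ c := by
  have : (P.support.sup fun m => (⟨v (coeff m P), v.nonneg _⟩ : NNReal)) ≤ ⟨c, hc⟩ :=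
    Finset.sup_le fun m _ => by exact_mod_cast h m
  exact_mod_cast this

lemma coeff_pderiv {σ : Type} [DecidableEq σ] (i : σ) (f : MvPolynomial σ K) (m : σ →₀ ℕ) :
    coeff m (pderiv i f) = ((m i + 1 : ℕ) : K) * coeff (m + Finsupp.single i 1) f := by
  induction f using MvPolynomial.induction_on' with
  | add p q hp hq => simp only [map_add, coeff_add, hp, hq, mul_add]
  | monomial s a =>
    rw [pderiv_monomial, coeff_monomial, coeff_monomial]
    by_cases hs : s = m + Finsupp.single i 1
    · subst hs
      rw [if_pos, if_pos rfl]
      · have hmi : ((m + Finsupp.single i 1 : σ →₀ ℕ)) i = m i + 1 := by simp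
        rw [hmi]
        push_cast
        ring
      · ext j
        by_cases hj : j = i
        · subst hj; simp
        · simp [Finsupp.single_apply, Ne.symm hj, hj]
    · rw [if_neg hs, mul_zero]
      by_cases hsub : s - Finsupp.single i 1 = m
      · rw [if_pos hsub]
        have hsi : s i = 0 := by
          by_contra hne
          apply hs
          have hle : Finsupp.single i 1 ≤ s := by
            rw [Finsupp.single_le_iff]
            omega
          rw [← hsub, tsub_add_cancel_of_le hle]
        simp [hsi]
      · rw [if_neg hsub]

lemma degreeOf_pderiv_le {σ : Type} [DecidableEq σ] (i j : σ) (f : MvPolynomial σ K) :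
    degreeOf j (pderiv i f) ≤ degreeOf j f := by
  rw [MvPolynomial.degreeOf_le_iff]
  intro m hm
  rw [MvPolynomial.mem_support_iff, coeff_pderiv] at hm
  have h2 : coeff (m + Finsupp.single i 1) f ≠ 0 := fun h => hm (by rw [h, mul_zero])
  calc m j ≤ ((m + Finsupp.single i 1 : σ →₀ ℕ)) j := by simp
    _ ≤ degreeOf j f := MvPolynomial.monomial_le_degreeOf j (MvPolynomial.mem_support_iff.mpr h2)

lemma degreeOf_neg {σ : Type} (i : σ) (f : MvPolynomial σ K) :
    degreeOf i (-f) = degreeOf i f := by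
  simp [MvPolynomial.degreeOf_eq_sup, MvPolynomial.support_neg]

lemma degreeOf_sub_le {σ : Type} (i : σ) (f g : MvPolynomial σ K) :
    degreeOf i (f - g) ≤ max (degreeOf i f) (degreeOf i g) := by
  rw [sub_eq_add_neg]
  exact le_trans (MvPolynomial.degreeOf_add_le _ _ _) (by rw [degreeOf_neg])

lemma card_support_le (P : MvPolynomial (Fin 2) K) :
    P.support.card ≤ (P.degreeOf 0 + 1) * (P.degreeOf 1 + 1) := by
  classical
  have h := Finset.card_le_card_of_injOn (f := fun m : Fin 2 →₀ ℕ => (m 0, m 1))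
    (t := Finset.range (P.degreeOf 0 + 1) ×ˢ Finset.range (P.degreeOf 1 + 1))
    (fun m hm => Finset.mem_product.mpr
      ⟨Finset.mem_range.mpr (Nat.lt_succ_of_le (MvPolynomial.monomial_le_degreeOf 0 hm)),
       Finset.mem_range.mpr (Nat.lt_succ_of_le (MvPolynomial.monomial_le_degreeOf 1 hm))⟩)
    (fun m₁ _ m₂ _ h => by
      ext a
      fin_cases a
      · exact congrArg Prod.fst h
      · exact congrArg Prod.snd h)
  simpa [Finset.card_product] using h

lemma nonarch_nat_le_one {v : AbsoluteValue K ℝ}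
    (h : ∀ x y : K, v (x + y) ≤ max (v x) (v y)) (k : ℕ) : v (k : K) ≤ 1 := by
  induction k with
  | zero => simp
  | succ k ih =>
    push_cast
    exact le_trans (h k 1) (by simp [ih])

lemma nonarch_sum_le {v : AbsoluteValue K ℝ}
    (h : ∀ x y : K, v (x + y) ≤ max (v x) (v y)) {ι : Type*} (t : Finset ι) (f : ι → K)
    {c : ℝ} (hc : 0 ≤ c) (hf : ∀ i ∈ t, v (f i) ≤ c) : v (∑ i ∈ t, f i) ≤ c := by
  classical
  induction t using Finset.cons_induction with
  | empty => simpa using hc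
  | cons a t ha ih =>
    rw [Finset.sum_cons]
    exact le_trans (h _ _) (max_le (hf a (Finset.mem_cons_self _ _))
      (ih fun i hi => hf i (Finset.mem_cons_of_mem hi)))

lemma term_le_arch (v : AbsoluteValue K ℝ) (harch : ∀ k : ℕ, v (k : K) = k)
    (P B : MvPolynomial (Fin 2) K) (i j : Fin 2) (dP dB : ℕ)
    (hdP : P.degreeOf i ≤ dP) (hdB : B.degreeOf j ≤ dB)
    (x : (Fin 2 →₀ ℕ) × (Fin 2 →₀ ℕ)) :
    v (coeff x.1 (pderiv i P) * coeff x.2 (pderiv j B)) ≤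
      ((dP * dB : ℕ) : ℝ) * (polyNormAt v P * polyNormAt v B) := by
  have hnP := polyNormAt_nonneg v P
  have hnB := polyNormAt_nonneg v B
  rw [coeff_pderiv, coeff_pderiv]
  by_cases h1 : coeff (x.1 + Finsupp.single i 1) P = 0
  · rw [h1, mul_zero, zero_mul, map_zero]
    positivity
  by_cases h2 : coeff (x.2 + Finsupp.single j 1) B = 0
  · rw [h2, mul_zero, mul_zero, map_zero]
    positivity
  have hk1 : x.1 i + 1 ≤ dP := by
    have := MvPolynomial.monomial_le_degreeOf i (MvPolynomial.mem_support_iff.mpr h1)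
    simpa using le_trans this hdP
  have hk2 : x.2 j + 1 ≤ dB := by
    have := MvPolynomial.monomial_le_degreeOf j (MvPolynomial.mem_support_iff.mpr h2)
    simpa using le_trans this hdB
  rw [map_mul, map_mul, map_mul, harch, harch]
  calc ((x.1 i + 1 : ℕ) : ℝ) * v (coeff (x.1 + Finsupp.single i 1) P) *
        (((x.2 j + 1 : ℕ) : ℝ) * v (coeff (x.2 + Finsupp.single j 1) B))
      ≤ (dP : ℝ) * polyNormAt v P * ((dB : ℝ) * polyNormAt v B) := by
        gcongr <;> first
          | exact_mod_cast hk1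
          | exact_mod_cast hk2
          | exact v_coeff_le v P _
          | exact v_coeff_le v B _
    _ = ((dP * dB : ℕ) : ℝ) * (polyNormAt v P * polyNormAt v B) := by push_cast; ring

lemma sum_term_le_arch (v : AbsoluteValue K ℝ) (harch : ∀ k : ℕ, v (k : K) = k)
    (P B : MvPolynomial (Fin 2) K) (i j : Fin 2) (dP dB KP : ℕ)
    (hdP : P.degreeOf i ≤ dP) (hdB : B.degreeOf j ≤ dB) (hKP : P.support.card ≤ KP)
    (m : Fin 2 →₀ ℕ) :
    ∑ x ∈ Finset.HasAntidiagonal.antidiagonal m, v (coeff x.1 (pderiv i P) * coeff x.2 (pderiv j B)) ≤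
      (KP : ℝ) * (((dP * dB : ℕ) : ℝ) * (polyNormAt v P * polyNormAt v B)) := by
  classical
  have hnP := polyNormAt_nonneg v P
  have hnB := polyNormAt_nonneg v B
  set S : Finset ((Fin 2 →₀ ℕ) × (Fin 2 →₀ ℕ)) :=
    (Finset.HasAntidiagonal.antidiagonal m).filter (fun x => x.1 + Finsupp.single i 1 ∈ P.support) with hS
  have hsum_eq : ∑ x ∈ Finset.HasAntidiagonal.antidiagonal m,
      v (coeff x.1 (pderiv i P) * coeff x.2 (pderiv j B)) =
      ∑ x ∈ S, v (coeff x.1 (pderiv i P) * coeff x.2 (pderiv j B)) := by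
    refine (Finset.sum_subset (Finset.filter_subset _ _) ?_).symm
    intro x hx hxS
    have : coeff (x.1 + Finsupp.single i 1) P = 0 := by
      by_contra hne
      exact hxS (Finset.mem_filter.mpr ⟨hx, MvPolynomial.mem_support_iff.mpr hne⟩)
    rw [coeff_pderiv, this, mul_zero, zero_mul, map_zero]
  have hcard : S.card ≤ KP := by
    refine le_trans (Finset.card_le_card_of_injOn (fun x => x.1 + Finsupp.single i 1)
      (fun x hx => (Finset.mem_filter.mp hx).2) ?_) hKP
    intro x hx y hy hxy
    have hx1 : x.1 = y.1 := by
      have := add_right_cancel hxy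
      exact this
    have hxm := Finset.HasAntidiagonal.mem_antidiagonal.mp (Finset.mem_filter.mp hx).1
    have hym := Finset.HasAntidiagonal.mem_antidiagonal.mp (Finset.mem_filter.mp hy).1
    have hx2 : x.2 = y.2 := by
      apply add_left_cancel (a := x.1)
      rw [hxm, hx1, hym]
    exact Prod.ext hx1 hx2
  rw [hsum_eq]
  calc ∑ x ∈ S, v (coeff x.1 (pderiv i P) * coeff x.2 (pderiv j B))
      ≤ S.card • (((dP * dB : ℕ) : ℝ) * (polyNormAt v P * polyNormAt v B)) :=
        Finset.sum_le_card_nsmul _ _ _ (fun x _ => term_le_arch v harch P B i j dP dB hdP hdB x)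
    _ = (S.card : ℝ) * (((dP * dB : ℕ) : ℝ) * (polyNormAt v P * polyNormAt v B)) := by
        rw [nsmul_eq_mul]
    _ ≤ (KP : ℝ) * (((dP * dB : ℕ) : ℝ) * (polyNormAt v P * polyNormAt v B)) := by
        gcongr
        all_goals exact_mod_cast hcard

lemma term_le_nonarch (v : AbsoluteValue K ℝ)
    (hna : ∀ x y : K, v (x + y) ≤ max (v x) (v y))
    (P B : MvPolynomial (Fin 2) K) (i j : Fin 2)
    (x : (Fin 2 →₀ ℕ) × (Fin 2 →₀ ℕ)) :
    v (coeff x.1 (pderiv i P) * coeff x.2 (pderiv j B)) ≤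
      polyNormAt v P * polyNormAt v B := by
  have hnP := polyNormAt_nonneg v P
  have hnB := polyNormAt_nonneg v B
  rw [coeff_pderiv, coeff_pderiv, map_mul, map_mul, map_mul]
  calc v ((x.1 i + 1 : ℕ) : K) * v (coeff (x.1 + Finsupp.single i 1) P) *
        (v ((x.2 j + 1 : ℕ) : K) * v (coeff (x.2 + Finsupp.single j 1) B))
      ≤ 1 * polyNormAt v P * (1 * polyNormAt v B) := by
        gcongr <;> first
          | exact nonarch_nat_le_one hna _
          | exact v_coeff_le v P _
          | exact v_coeff_le v B _
    _ = polyNormAt v P * polyNormAt v B := by ring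

lemma step (v : AbsoluteValue K ℝ) (hv : IsPlace v)
    (P B : MvPolynomial (Fin 2) K) (p q NB MB C : ℕ)
    (hdP0 : P.degreeOf 0 ≤ p) (hdP1 : P.degreeOf 1 ≤ q)
    (hB0 : B.degreeOf 0 ≤ NB) (hB1 : B.degreeOf 1 ≤ MB)
    (hC : (p + 1) * (q + 1) * (q * NB + p * MB) ≤ C) :
    polyNormAt v (Dop P B) ≤
      max 1 (v ((C : ℕ) : K)) * (polyNormAt v P * polyNormAt v B) := by
  classical
  have hnP := polyNormAt_nonneg v P
  have hnB := polyNormAt_nonneg v B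
  have hδ : (1 : ℝ) ≤ max 1 (v ((C : ℕ) : K)) := le_max_left _ _
  have hKP : P.support.card ≤ (p + 1) * (q + 1) := by
    refine le_trans (card_support_le P) ?_
    exact Nat.mul_le_mul (by omega) (by omega)
  have hbound0 : (0 : ℝ) ≤ max 1 (v ((C : ℕ) : K)) * (polyNormAt v P * polyNormAt v B) := by
    have : (0:ℝ) ≤ polyNormAt v P * polyNormAt v B := mul_nonneg hnP hnB
    nlinarith
  apply polyNormAt_le hbound0
  intro m
  have hcoeff : coeff m (Dop P B) = ∑ x ∈ Finset.HasAntidiagonal.antidiagonal m,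
      (coeff x.1 (pderiv 1 P) * coeff x.2 (pderiv 0 B)
        - coeff x.1 (pderiv 0 P) * coeff x.2 (pderiv 1 B)) := by
    simp [Dop, MvPolynomial.coeff_sub, MvPolynomial.coeff_mul, Finset.sum_sub_distrib]
  rw [hcoeff]
  rcases hv with harch | ⟨_, _, hna, _⟩
  · -- archimedean case
    calc v (∑ x ∈ Finset.HasAntidiagonal.antidiagonal m,
          (coeff x.1 (pderiv 1 P) * coeff x.2 (pderiv 0 B)
            - coeff x.1 (pderiv 0 P) * coeff x.2 (pderiv 1 B)))
        ≤ ∑ x ∈ Finset.HasAntidiagonal.antidiagonal m,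
          v (coeff x.1 (pderiv 1 P) * coeff x.2 (pderiv 0 B)
            - coeff x.1 (pderiv 0 P) * coeff x.2 (pderiv 1 B)) :=
          v.sum_le _ _
      _ ≤ ∑ x ∈ Finset.HasAntidiagonal.antidiagonal m,
          (v (coeff x.1 (pderiv 1 P) * coeff x.2 (pderiv 0 B)) +
            v (coeff x.1 (pderiv 0 P) * coeff x.2 (pderiv 1 B))) := by
          refine Finset.sum_le_sum fun x _ => ?_
          rw [sub_eq_add_neg]
          exact le_trans (v.add_le _ _) (by rw [v.map_neg])
      _ = (∑ x ∈ Finset.HasAntidiagonal.antidiagonal m,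
            v (coeff x.1 (pderiv 1 P) * coeff x.2 (pderiv 0 B))) +
          ∑ x ∈ Finset.HasAntidiagonal.antidiagonal m,
            v (coeff x.1 (pderiv 0 P) * coeff x.2 (pderiv 1 B)) :=
          Finset.sum_add_distrib
      _ ≤ ((p+1)*(q+1) : ℕ) * (((q * NB : ℕ) : ℝ) * (polyNormAt v P * polyNormAt v B)) +
          ((p+1)*(q+1) : ℕ) * (((p * MB : ℕ) : ℝ) * (polyNormAt v P * polyNormAt v B)) := by
          refine add_le_add ?_ ?_
          · exact sum_term_le_arch v harch P B 1 0 q NB ((p+1)*(q+1)) hdP1 hB0 hKP m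
          · exact sum_term_le_arch v harch P B 0 1 p MB ((p+1)*(q+1)) hdP0 hB1 hKP m
      _ = (((p + 1) * (q + 1) * (q * NB + p * MB) : ℕ) : ℝ) *
            (polyNormAt v P * polyNormAt v B) := by push_cast; ring
      _ ≤ ((C : ℕ) : ℝ) * (polyNormAt v P * polyNormAt v B) := by
          have : (((p + 1) * (q + 1) * (q * NB + p * MB) : ℕ) : ℝ) ≤ ((C : ℕ) : ℝ) := by
            exact_mod_cast hC
          exact mul_le_mul_of_nonneg_right this (mul_nonneg hnP hnB)
      _ = v ((C : ℕ) : K) * (polyNormAt v P * polyNormAt v B) := by rw [harch]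
      _ ≤ max 1 (v ((C : ℕ) : K)) * (polyNormAt v P * polyNormAt v B) :=
          mul_le_mul_of_nonneg_right (le_max_right _ _) (mul_nonneg hnP hnB)
  · -- non-archimedean case
    have hterm : ∀ x ∈ Finset.HasAntidiagonal.antidiagonal m,
        v (coeff x.1 (pderiv 1 P) * coeff x.2 (pderiv 0 B)
          - coeff x.1 (pderiv 0 P) * coeff x.2 (pderiv 1 B)) ≤
        polyNormAt v P * polyNormAt v B := by
      intro x _
      rw [sub_eq_add_neg]
      refine le_trans (hna _ _) (max_le ?_ ?_)
      · exact term_le_nonarch v hna P B 1 0 x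
      · rw [v.map_neg]
        exact term_le_nonarch v hna P B 0 1 x
    refine le_trans (nonarch_sum_le hna _ _ (mul_nonneg hnP hnB) hterm) ?_
    exact le_mul_of_one_le_left (mul_nonneg hnP hnB) hδ


end Aux

/-- Lemma 3.1, height bound: for every place `v` of `K`,
`|D^s(A)|_v ≤ δ_v(2(p+1)(q+1)r(n+rs))^s |P|_v^s |A|_v` with `r = max{p,q}`. -/
theorem norm_iterated_D {K : Type} [Field K] [NumberField K]
    (v : AbsoluteValue K ℝ) (hv : IsPlace v)
    (P : MvPolynomial (Fin 2) K) (p q n : ℕ)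
    (hdp : P.degreeOf 0 = p) (hdq : P.degreeOf 1 = q)
    (hp1 : 1 ≤ p) (hq1 : 1 ≤ q)
    (A : MvPolynomial (Fin 2) K)
    (hAX : A.degreeOf 0 ≤ n) (hAY : A.degreeOf 1 ≤ q - 1) (s : ℕ) :
    polyNormAt v ((Dop P)^[s] A) ≤
      (max 1 (v ((2 * (p + 1) * (q + 1) * max p q * (n + max p q * s) : ℕ) : K))) ^ s *
        polyNormAt v P ^ s * polyNormAt v A := by
  classical
  set r : ℕ := max p q with hr
  set C : ℕ := 2 * (p + 1) * (q + 1) * r * (n + r * s) with hCdef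
  have hpr : p ≤ r := le_max_left p q
  have hqr : q ≤ r := le_max_right p q
  have hnP := Aux.polyNormAt_nonneg v P
  have hnA := Aux.polyNormAt_nonneg v A
  have hδ0 : (0 : ℝ) ≤ max 1 (v ((C : ℕ) : K)) :=
    le_trans zero_le_one (le_max_left _ _)
  have hdeg : ∀ j : ℕ, degreeOf 0 ((Dop P)^[j] A) ≤ n + j * r ∧
      degreeOf 1 ((Dop P)^[j] A) ≤ (q - 1) + j * q := by
    intro j
    induction j with
    | zero => simpa using ⟨hAX, hAY⟩
    | succ j ih =>
      obtain ⟨ih0, ih1⟩ := ih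
      rw [Function.iterate_succ_apply']
      constructor
      · refine le_trans (Aux.degreeOf_sub_le 0 _ _) (max_le ?_ ?_)
        · refine le_trans (MvPolynomial.degreeOf_mul_le 0 _ _) ?_
          have h1 : degreeOf 0 (pderiv 1 P) ≤ p := hdp ▸ Aux.degreeOf_pderiv_le 1 0 P
          have h2 : degreeOf 0 (pderiv 0 ((Dop P)^[j] A)) ≤ n + j * r :=
            le_trans (Aux.degreeOf_pderiv_le 0 0 _) ih0
          have := Nat.add_le_add h1 h2
          have hmul : (j + 1) * r = j * r + r := Nat.succ_mul j r
          omega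
        · refine le_trans (MvPolynomial.degreeOf_mul_le 0 _ _) ?_
          have h1 : degreeOf 0 (pderiv 0 P) ≤ p := hdp ▸ Aux.degreeOf_pderiv_le 0 0 P
          have h2 : degreeOf 0 (pderiv 1 ((Dop P)^[j] A)) ≤ n + j * r :=
            le_trans (Aux.degreeOf_pderiv_le 1 0 _) ih0
          have := Nat.add_le_add h1 h2
          have hmul : (j + 1) * r = j * r + r := Nat.succ_mul j r
          omega
      · refine le_trans (Aux.degreeOf_sub_le 1 _ _) (max_le ?_ ?_)
        · refine le_trans (MvPolynomial.degreeOf_mul_le 1 _ _) ?_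
          have h1 : degreeOf 1 (pderiv 1 P) ≤ q := hdq ▸ Aux.degreeOf_pderiv_le 1 1 P
          have h2 : degreeOf 1 (pderiv 0 ((Dop P)^[j] A)) ≤ (q - 1) + j * q :=
            le_trans (Aux.degreeOf_pderiv_le 0 1 _) ih1
          have := Nat.add_le_add h1 h2
          have hmul : (j + 1) * q = j * q + q := Nat.succ_mul j q
          omega
        · refine le_trans (MvPolynomial.degreeOf_mul_le 1 _ _) ?_
          have h1 : degreeOf 1 (pderiv 0 P) ≤ q := hdq ▸ Aux.degreeOf_pderiv_le 0 1 P
          have h2 : degreeOf 1 (pderiv 1 ((Dop P)^[j] A)) ≤ (q - 1) + j * q :=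
            le_trans (Aux.degreeOf_pderiv_le 1 1 _) ih1
          have := Nat.add_le_add h1 h2
          have hmul : (j + 1) * q = j * q + q := Nat.succ_mul j q
          omega
  have main : ∀ j : ℕ, j ≤ s → polyNormAt v ((Dop P)^[j] A) ≤
      (max 1 (v ((C : ℕ) : K))) ^ j * polyNormAt v P ^ j * polyNormAt v A := by
    intro j
    induction j with
    | zero => intro _; simpa using le_refl (polyNormAt v A)
    | succ j ih =>
      intro hjs
      have hj : j ≤ s := Nat.le_of_succ_le hjs
      obtain ⟨hd0, hd1⟩ := hdeg j
      rw [Function.iterate_succ_apply']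
      have harith : (p + 1) * (q + 1) * (q * (n + j * r) + p * ((q - 1) + j * q)) ≤ C := by
        have h1 : q * (n + j * r) ≤ r * (n + r * s) := by
          refine Nat.mul_le_mul hqr ?_
          have : j * r ≤ s * r := Nat.mul_le_mul_right r hj
          have : s * r = r * s := Nat.mul_comm s r
          omega
        have h2 : p * ((q - 1) + j * q) ≤ r * (n + r * s) := by
          have ha : (q - 1) + j * q ≤ (j + 1) * q := by
            have : (j + 1) * q = j * q + q := by ring
            omega
          have hb : (j + 1) * q ≤ s * r :=
            le_trans (Nat.mul_le_mul_right q hjs) (Nat.mul_le_mul_left s hqr)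
          have hc : (q - 1) + j * q ≤ n + r * s := by
            have : s * r = r * s := Nat.mul_comm s r
            omega
          exact Nat.mul_le_mul hpr hc
        calc (p + 1) * (q + 1) * (q * (n + j * r) + p * ((q - 1) + j * q))
            ≤ (p + 1) * (q + 1) * (r * (n + r * s) + r * (n + r * s)) :=
              Nat.mul_le_mul_left _ (Nat.add_le_add h1 h2)
          _ = C := by rw [hCdef]; ring
      have hstep := Aux.step v hv P ((Dop P)^[j] A) p q (n + j * r) ((q - 1) + j * q) C
        hdp.le hdq.le hd0 hd1 harith
      calc polyNormAt v (Dop P ((Dop P)^[j] A))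
          ≤ max 1 (v ((C : ℕ) : K)) * (polyNormAt v P * polyNormAt v ((Dop P)^[j] A)) := hstep
        _ ≤ max 1 (v ((C : ℕ) : K)) * (polyNormAt v P *
              ((max 1 (v ((C : ℕ) : K))) ^ j * polyNormAt v P ^ j * polyNormAt v A)) :=
            mul_le_mul_of_nonneg_left (mul_le_mul_of_nonneg_left (ih hj) hnP) hδ0
        _ = (max 1 (v ((C : ℕ) : K))) ^ (j + 1) * polyNormAt v P ^ (j + 1) *
              polyNormAt v A := by ring
  exact main s le_rfl

end
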